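/- For every integer k ≥ 0 and every r ∈ (0,1), the monomial r^k admits the finite expansion r^k = ∑_{q=0}^{k} χ_{k,q} P_q(r), where χ_{k,q} = (-1)^q · √(2q+d) · (k+d-1)! · k! / ((k+d+q)! · (k-q)!). -/

import Mathlib

open Finset

/-- The shifted normalized Jacobi polynomials from the paper. -/
noncomputable def jacobiP (d k : ℕ) (r : ℝ) : ℝ :=
  Real.sqrt (2 * k + d) *
    ∑ q ∈ Finset.range (k + 1),
      (-1 : ℝ) ^ q * (Nat.choose k q : ℝ) * (Nat.choose (k + q + d - 1) k : ℝ) * r ^ q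

/-- The expansion coefficients of the monomial `r^k` in the Jacobi polynomials. -/
noncomputable def jacobiChi (d k q : ℕ) : ℝ :=
  (-1 : ℝ) ^ q * Real.sqrt (2 * q + d) *
    (Nat.factorial (k + d - 1) : ℝ) * (Nat.factorial k : ℝ) /
      ((Nat.factorial (k + d + q) : ℝ) * (Nat.factorial (k - q) : ℝ))

/-! ### Auxiliary definitions for the proof -/

noncomputable def jF (d j k q : ℕ) : ℝ :=
  ((2*q+d : ℕ) : ℝ) * (Nat.factorial (q+j+d-1) : ℝ) /
    ((Nat.factorial (q-j) : ℝ) * (Nat.factorial (k+q+d) : ℝ) * (Nat.factorial (k-q) : ℝ))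

noncomputable def jG (d j k q : ℕ) : ℝ :=
  ((k-q : ℕ) : ℝ) * (Nat.factorial (q+j+d) : ℝ) /
    ((Nat.factorial (q-j) : ℝ) * (Nat.factorial (k+q+d) : ℝ) * (Nat.factorial (k-q) : ℝ))

noncomputable def jD (d k j : ℕ) : ℝ :=
  (Nat.factorial (k+d-1) : ℝ) * (Nat.factorial k : ℝ) /
    ((Nat.factorial j : ℝ) * (Nat.factorial (j+d-1) : ℝ))

lemma jstep (d j k q : ℕ) (hd : 1 ≤ d) (hq : j ≤ q) (hk : q < k) :
    ((k - j : ℕ) : ℝ) * jF d j k (q+1) = jG d j k (q+1) + jG d j k q := by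
  obtain ⟨m, rfl⟩ : ∃ m, q = j + m := ⟨q - j, by omega⟩
  obtain ⟨s, rfl⟩ : ∃ s, k = j + m + 1 + s := ⟨k - (j+m+1), by omega⟩
  unfold jF jG
  have e1 : j + m + 1 + s - j = m + 1 + s := by omega
  have e2 : 2*(j+m+1)+d = 2*j+2*m+d+2 := by omega
  have e3 : j+m+1+j+d-1 = 2*j+m+d := by omega
  have e4 : j+m+1-j = m+1 := by omega
  have e5 : j+m+1+s+(j+m+1)+d = (2*j+2*m+s+d+1)+1 := by omega
  have e6 : j+m+1+s-(j+m+1) = s := by omega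
  have e7 : j+m+1+j+d = (2*j+m+d)+1 := by omega
  have e9 : j+m-j = m := by omega
  have e10 : j+m+1+s+(j+m)+d = 2*j+2*m+s+d+1 := by omega
  have e11 : j+m+1+s-(j+m) = s+1 := by omega
  have e12 : j+m+j+d = 2*j+m+d := by omega
  rw [e1, e2, e3, e4, e5, e6, e7, e9, e10, e11, e12]
  rw [Nat.factorial_succ (2*j+2*m+s+d+1), Nat.factorial_succ (2*j+m+d),
      Nat.factorial_succ m, Nat.factorial_succ s]
  push_cast
  have h1 : (Nat.factorial m : ℝ) ≠ 0 := by positivity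
  have h2 : (Nat.factorial s : ℝ) ≠ 0 := by positivity
  have h3 : (Nat.factorial (2*j+2*m+s+d+1) : ℝ) ≠ 0 := by positivity
  have h4 : (Nat.factorial (2*j+m+d) : ℝ) ≠ 0 := by positivity
  field_simp
  ring

lemma jtele (d j k : ℕ) (hd : 1 ≤ d) : ∀ n, j + n ≤ k →
    ∑ q ∈ Icc j (j+n), (-1:ℝ)^(q-j) * (((k - j : ℕ):ℝ) * jF d j k q)
      = (-1:ℝ)^n * jG d j k (j+n) := by
  intro n
  induction n with
  | zero =>
    intro hk
    simp only [Nat.add_zero, Icc_self, sum_singleton, Nat.sub_self, pow_zero, one_mul]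
    unfold jF jG
    have e1 : j + j + d - 1 = (2*j+d) - 1 := by omega
    have e2 : j + j + d = 2*j+d := by omega
    have e3 : 2*j+d = (2*j+d-1)+1 := by omega
    rw [e1, e2]
    rw [show Nat.factorial (2*j+d) = (2*j+d) * Nat.factorial (2*j+d-1) by
      conv_lhs => rw [e3, Nat.factorial_succ, ← e3]]
    push_cast
    ring
  | succ n ih =>
    intro hk
    rw [show j + (n+1) = (j + n) + 1 by omega,
        Finset.sum_Icc_succ_top (by omega : j ≤ j + n + 1),
        ih (by omega)]
    have e : j + n + 1 - j = n + 1 := by omega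
    rw [e, jstep d j k (j+n) hd (by omega) (by omega)]
    ring

lemma jdelta (d j k : ℕ) (hd : 1 ≤ d) (hjk : j ≤ k) :
    ∑ q ∈ Icc j k, (-1:ℝ)^(q-j) * jF d j k q = if j = k then 1 else 0 := by
  rcases eq_or_lt_of_le hjk with rfl | hlt
  · simp only [Icc_self, sum_singleton, Nat.sub_self, pow_zero, one_mul, if_pos rfl]
    unfold jF
    have e1 : j + j + d - 1 = (2*j+d) - 1 := by omega
    have e2 : j + j + d = 2*j+d := by omega
    have e3 : Nat.factorial (2*j+d) = (2*j+d) * Nat.factorial (2*j+d-1) := by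
      conv_lhs => rw [show 2*j+d = (2*j+d-1)+1 by omega, Nat.factorial_succ]
      rw [show (2*j+d-1)+1 = 2*j+d by omega]
    rw [e1, e2, e3, Nat.sub_self]
    have h4 : (Nat.factorial (2*j+d-1) : ℝ) ≠ 0 := by positivity
    have h5 : (0:ℝ) < (2*j+d : ℕ) := by positivity
    push_cast
    field_simp
    simp
  · rw [if_neg (by omega)]
    have h := jtele d j k hd (k - j) (by omega)
    rw [show j + (k - j) = k by omega] at h
    have hG : jG d j k k = 0 := by
      unfold jG; rw [Nat.sub_self]; simp
    rw [hG, mul_zero] at h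
    have h2 : ((k - j : ℕ) : ℝ) * ∑ q ∈ Icc j k, (-1:ℝ)^(q-j) * jF d j k q = 0 := by
      rw [Finset.mul_sum, ← h]
      exact Finset.sum_congr rfl fun q _ => by ring
    have h3 : ((k - j : ℕ) : ℝ) ≠ 0 := by
      simp only [ne_eq, Nat.cast_eq_zero]; omega
    exact (mul_eq_zero.mp h2).resolve_left h3

lemma sum_swap_tri (f : ℕ → ℕ → ℝ) : ∀ k, ∑ q ∈ range (k+1), ∑ j ∈ range (q+1), f q j
    = ∑ j ∈ range (k+1), ∑ q ∈ Icc j k, f q j := by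
  intro k
  induction k with
  | zero => simp
  | succ k ih =>
    rw [Finset.sum_range_succ, ih,
        Finset.sum_range_succ (fun j => ∑ q ∈ Icc j (k+1), f q j),
        Finset.sum_range_succ (f (k+1))]
    simp only [Icc_self, sum_singleton]
    have h : ∀ j ∈ range (k+1), ∑ q ∈ Icc j (k+1), f q j
        = (∑ q ∈ Icc j k, f q j) + f (k+1) j := by
      intro j hj
      exact Finset.sum_Icc_succ_top (by have := mem_range.mp hj; omega) _
    rw [Finset.sum_congr rfl h, Finset.sum_add_distrib]
    ring

lemma jterm (d k q j : ℕ) (hd : 2 ≤ d) (hj : j ≤ q) (hq : q ≤ k) (r : ℝ) :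
    ((-1:ℝ)^q * Real.sqrt (2*q+d) * (Nat.factorial (k+d-1) : ℝ) * (Nat.factorial k : ℝ) /
        ((Nat.factorial (k+d+q) : ℝ) * (Nat.factorial (k-q) : ℝ))) *
      (Real.sqrt (2*q+d) *
        ((-1:ℝ)^j * (Nat.choose q j : ℝ) * (Nat.choose (q+j+d-1) q : ℝ) * r^j))
    = jD d k j * ((-1:ℝ)^(q-j) * jF d j k q) * r^j := by
  have hsq : Real.sqrt (2*(q:ℝ)+(d:ℝ)) * Real.sqrt (2*(q:ℝ)+(d:ℝ)) = 2*(q:ℝ)+(d:ℝ) :=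
    Real.mul_self_sqrt (by positivity)
  have hc1 : (q.choose j : ℝ) = (Nat.factorial q : ℝ) /
      ((Nat.factorial j : ℝ) * (Nat.factorial (q-j) : ℝ)) := Nat.cast_choose ℝ hj
  have hc2 : ((q+j+d-1).choose q : ℝ) = (Nat.factorial (q+j+d-1) : ℝ) /
      ((Nat.factorial q : ℝ) * (Nat.factorial (j+d-1) : ℝ)) := by
    rw [Nat.cast_choose ℝ (by omega : q ≤ q+j+d-1), show q+j+d-1-q = j+d-1 by omega]
  have hsg : ((-1:ℝ))^(q-j) = (-1:ℝ)^q * (-1:ℝ)^j := by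
    rw [← pow_add, show q + j = (q-j) + 2*j by omega, pow_add, pow_mul]; norm_num
  calc ((-1:ℝ)^q * Real.sqrt (2*q+d) * (Nat.factorial (k+d-1) : ℝ) * (Nat.factorial k : ℝ) /
        ((Nat.factorial (k+d+q) : ℝ) * (Nat.factorial (k-q) : ℝ))) *
      (Real.sqrt (2*q+d) *
        ((-1:ℝ)^j * (Nat.choose q j : ℝ) * (Nat.choose (q+j+d-1) q : ℝ) * r^j))
      = (Real.sqrt (2*(q:ℝ)+(d:ℝ)) * Real.sqrt (2*(q:ℝ)+(d:ℝ))) *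
        ((-1:ℝ)^q * (Nat.factorial (k+d-1) : ℝ) * (Nat.factorial k : ℝ) /
          ((Nat.factorial (k+d+q) : ℝ) * (Nat.factorial (k-q) : ℝ)) *
          ((-1:ℝ)^j * (Nat.choose q j : ℝ) * (Nat.choose (q+j+d-1) q : ℝ) * r^j)) := by
        ring
    _ = (2*(q:ℝ)+(d:ℝ)) *
        ((-1:ℝ)^q * (Nat.factorial (k+d-1) : ℝ) * (Nat.factorial k : ℝ) /
          ((Nat.factorial (k+d+q) : ℝ) * (Nat.factorial (k-q) : ℝ)) *
          ((-1:ℝ)^j * (Nat.choose q j : ℝ) * (Nat.choose (q+j+d-1) q : ℝ) * r^j)) := by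
        rw [hsq]
    _ = jD d k j * ((-1:ℝ)^(q-j) * jF d j k q) * r^j := by
        rw [hc1, hc2, hsg]
        unfold jD jF
        rw [show k+d+q = k+q+d by omega]
        have n1 : (Nat.factorial (k+q+d) : ℝ) ≠ 0 := by positivity
        have n2 : (Nat.factorial (k-q) : ℝ) ≠ 0 := by positivity
        have n3 : (Nat.factorial j : ℝ) ≠ 0 := by positivity
        have n4 : (Nat.factorial (q-j) : ℝ) ≠ 0 := by positivity
        have n5 : (Nat.factorial q : ℝ) ≠ 0 := by positivity
        have n6 : (Nat.factorial (j+d-1) : ℝ) ≠ 0 := by positivity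
        push_cast
        field_simp

/-- Expansion of the monomial `r^k` in the Jacobi polynomials. -/
theorem monomial_eq_sum_jacobiP (d : ℕ) (hd : 2 ≤ d) (k : ℕ) (r : ℝ)
    (hr : r ∈ Set.Ioo (0:ℝ) 1) :
    r ^ k = ∑ q ∈ Finset.range (k + 1), jacobiChi d k q * jacobiP d q r := by
  symm
  have step1 : ∀ q ∈ range (k+1), jacobiChi d k q * jacobiP d q r
      = ∑ j ∈ range (q+1), (jD d k j * ((-1:ℝ)^(q-j) * jF d j k q)) * r^j := by
    intro q hq
    have hqk : q ≤ k := by have := mem_range.mp hq; omega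
    unfold jacobiChi jacobiP
    rw [Finset.mul_sum, Finset.mul_sum]
    refine Finset.sum_congr rfl fun j hj => ?_
    have hjq : j ≤ q := by have := mem_range.mp hj; omega
    have := jterm d k q j hd hjq hqk r
    rw [show q + j + d - 1 = q+j+d-1 from rfl] at this
    convert this using 2
  rw [Finset.sum_congr rfl step1]
  rw [sum_swap_tri (fun q j => (jD d k j * ((-1:ℝ)^(q-j) * jF d j k q)) * r^j) k]
  have step2 : ∀ j ∈ range (k+1),
      ∑ q ∈ Icc j k, (jD d k j * ((-1:ℝ)^(q-j) * jF d j k q)) * r^j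
      = (jD d k j * r^j) * (if j = k then 1 else 0) := by
    intro j hj
    have hjk : j ≤ k := by have := mem_range.mp hj; omega
    rw [← jdelta d j k (by omega) hjk, Finset.mul_sum]
    exact Finset.sum_congr rfl fun q _ => by ring
  rw [Finset.sum_congr rfl step2]
  rw [Finset.sum_eq_single_of_mem k (self_mem_range_succ k)
      (fun j hj hne => by rw [if_neg hne, mul_zero])]
  rw [if_pos rfl, mul_one]
  have hD : jD d k k = 1 := by
    unfold jD
    have n1 : (Nat.factorial k : ℝ) ≠ 0 := by positivity
    have n2 : (Nat.factorial (k+d-1) : ℝ) ≠ 0 := by positivity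
    field_simp
  rw [hD, one_mul]
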